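/- The quadratic X^2 + ((2y^6 + 12y^5 + 20y^4 + 10y^3 - 5y^2 - 4y + 1)/(y^5 + 8y^4 + 25y^3 + 38y^2 + 28y + 8))·X + (y^7 + 4y^6 - y^5)/(y^5 + 8y^4 + 25y^3 + 38y^2 + 28y + 8) = 0, viewed over the field of formal Laurent series in y, has exactly one solution that is a power series with zero constant term. -/

import Mathlib

open PowerSeries


private lemma mem_span_X_pow (n : ℕ) (f : PowerSeries ℚ) :
    f ∈ (Ideal.span {(X : PowerSeries ℚ)}) ^ n ↔ ∀ m < n, coeff m f = 0 := by
  rw [Ideal.span_singleton_pow, Ideal.mem_span_singleton]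
  exact X_pow_dvd_iff

private instance : IsAdicComplete (Ideal.span {(X : PowerSeries ℚ)}) (PowerSeries ℚ) where
  haus' := by
    intro x hx
    ext n
    have h := hx (n + 1)
    rw [SModEq.sub_mem, sub_zero, smul_eq_mul, Ideal.mul_top, mem_span_X_pow] at h
    simpa using h n (Nat.lt_succ_self n)
  prec' := by
    intro f hf
    refine ⟨PowerSeries.mk fun n => coeff n (f (n + 1)), fun n => ?_⟩
    rw [SModEq.sub_mem, smul_eq_mul, Ideal.mul_top, mem_span_X_pow]
    intro m hm
    have h := hf (show m + 1 ≤ n from hm)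
    rw [SModEq.sub_mem, smul_eq_mul, Ideal.mul_top, mem_span_X_pow] at h
    have := h m (Nat.lt_succ_self m)
    simp only [map_sub, coeff_mk] at this ⊢
    linarith [this]

/-- the quadratic (over Laurent series, equivalently after clearing the
invertible denominator `y^5+8y^4+25y^3+38y^2+28y+8`, whose constant term is `8 ≠ 0`)
has exactly one power-series solution with zero constant term. -/
theorem stmt_2 :
    ∃! S : PowerSeries ℚ,
      constantCoeff S = 0 ∧
      (X^5 + 8*X^4 + 25*X^3 + 38*X^2 + 28*X + 8) * S^2
        + (2*X^6 + 12*X^5 + 20*X^4 + 10*X^3 - 5*X^2 - 4*X + 1) * S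
        + (X^7 + 4*X^6 - X^5) = 0 := by
  set A : PowerSeries ℚ := X^5 + 8*X^4 + 25*X^3 + 38*X^2 + 28*X + 8 with hA
  set B : PowerSeries ℚ := 2*X^6 + 12*X^5 + 20*X^4 + 10*X^3 - 5*X^2 - 4*X + 1 with hB
  set Cp : PowerSeries ℚ := X^7 + 4*X^6 - X^5 with hCp
  have hA0 : constantCoeff A = 8 := by simp [hA, map_ofNat]
  have hB0 : constantCoeff B = 1 := by simp [hB]
  have hAu : IsUnit A := isUnit_iff_constantCoeff.mpr (by rw [hA0]; norm_num)
  have hBu : IsUnit B := isUnit_iff_constantCoeff.mpr (by rw [hB0]; norm_num)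
  obtain ⟨uA, huA⟩ := hAu
  -- existence via Henselian property
  have hH : HenselianRing (PowerSeries ℚ) (Ideal.span {(X : PowerSeries ℚ)}) :=
    inferInstance
  set b : PowerSeries ℚ := (↑uA⁻¹ : PowerSeries ℚ) * B with hb
  set c : PowerSeries ℚ := (↑uA⁻¹ : PowerSeries ℚ) * Cp with hc
  set f : Polynomial (PowerSeries ℚ) :=
    Polynomial.X ^ 2 + (Polynomial.C b * Polynomial.X + Polynomial.C c) with hf
  have hmonic : f.Monic := by
    exact Polynomial.monic_X_pow_add Polynomial.degree_linear_lt
  have hXdvdC : (X : PowerSeries ℚ) ∣ Cp := by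
    refine ⟨X^6 + 4*X^5 - X^4, ?_⟩; rw [hCp]; ring
  have heval0 : f.eval 0 ∈ Ideal.span {(X : PowerSeries ℚ)} := by
    rw [Ideal.mem_span_singleton]
    simp only [hf, Polynomial.eval_add, Polynomial.eval_pow, Polynomial.eval_X,
      Polynomial.eval_mul, Polynomial.eval_C]
    have : (0:PowerSeries ℚ) ^ 2 + (b * 0 + c) = (↑uA⁻¹ : PowerSeries ℚ) * Cp := by
      rw [hc]; ring
    rw [this]
    exact hXdvdC.mul_left _
  have hderiv : IsUnit (Ideal.Quotient.mk (Ideal.span {(X : PowerSeries ℚ)})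
      (f.derivative.eval 0)) := by
    have : f.derivative.eval 0 = b := by
      simp [hf, Polynomial.derivative_add, Polynomial.derivative_pow]
    rw [this]
    exact (((uA⁻¹).isUnit).mul hBu).map _
  obtain ⟨a, hroot, ha⟩ := hH.is_henselian f hmonic 0 heval0 hderiv
  have ha0 : constantCoeff a = 0 := by
    rw [sub_zero, Ideal.mem_span_singleton, X_dvd_iff] at ha
    exact ha
  have hrooteq : a ^ 2 + b * a + c = 0 := by
    have := hroot
    simp only [Polynomial.IsRoot, hf, Polynomial.eval_add, Polynomial.eval_pow,
      Polynomial.eval_X, Polynomial.eval_mul, Polynomial.eval_C] at this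
    linear_combination this
  have key : ∀ S : PowerSeries ℚ, A * S^2 + B * S + Cp = A * (S^2 + b * S + c) := by
    intro S
    have h1 : A * b = B := by rw [hb, ← huA]; rw [← mul_assoc]; simp
    have h2 : A * c = Cp := by rw [hc, ← huA]; rw [← mul_assoc]; simp
    calc A * S^2 + B * S + Cp = A * S^2 + (A * b) * S + (A * c) := by rw [h1, h2]
      _ = A * (S^2 + b * S + c) := by ring
  refine ⟨a, ⟨ha0, by rw [key a, hrooteq, mul_zero]⟩, ?_⟩
  rintro S ⟨hS0, hSeq⟩
  -- uniqueness
  have hfac : (S - a) * (A * (S + a) + B) = 0 := by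
    have h2 : A * a^2 + B * a + Cp = 0 := by rw [key a, hrooteq, mul_zero]
    linear_combination hSeq - h2
  rcases mul_eq_zero.mp hfac with h | h
  · exact sub_eq_zero.mp h
  · exfalso
    have : constantCoeff (A * (S + a) + B) = 1 := by
      simp [map_add, map_mul, hA0, hB0, hS0, ha0]
    rw [h] at this
    simp at this
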